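/- Let f₁,…,f_s : ℝ^d → ℝ be differentiable and convex, with each f_j being L_j-smooth for some L_j > 0; let f = (1/s)·Σⱼ₌₁ˢ f_j and L̄ = (1/s)·Σⱼ₌₁ˢ L_j. Fix x, w ∈ ℝ^d. Let J₁,…,J_K be i.i.d. random indices in Fin s with P(J = j) = L_j/(s·L̄), and define the random vector g = (1/K)·Σₘ₌₁ᴷ (L̄/L_{Jₘ})·(∇f_{Jₘ}(x) − ∇f_{Jₘ}(w)) + ∇f(w). Then E[g] = ∇f(x) and E[‖g − ∇f(x)‖²] ≤ 2·max{L, L̄/K}·(f(w) − f(x) − ⟨∇f(x), w − x⟩) for any L > 0 such that f is L-smooth; in fact E[‖g − ∇f(x)‖²] ≤ (2L̄/K)·(f(w) − f(x) − ⟨∇f(x), w − x⟩). -/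

import Mathlib

open MeasureTheory ProbabilityTheory
open scoped RealInnerProductSpace ENNReal

set_option linter.unusedSectionVars false
set_option maxHeartbeats 1000000

section aux

variable {E' : Type*} [NormedAddCommGroup E'] [InnerProductSpace ℝ E'] [CompleteSpace E']

private lemma aux_inner_gradient (h : E' → ℝ) (u v : E') :
    ⟪gradient h u, v⟫ = fderiv ℝ h u v :=
  InnerProductSpace.toDual_symm_apply

private lemma aux_grad_ineq (h : E' → ℝ) (hd : Differentiable ℝ h)
    (hc : ConvexOn ℝ Set.univ h) (u v : E') :
    h u + ⟪gradient h u, v - u⟫ ≤ h v := by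
  set ψ : ℝ → ℝ := fun t => h (u + t • (v - u)) with hψ
  have hψc : ConvexOn ℝ Set.univ ψ := by
    have := hc.comp_affineMap (AffineMap.lineMap u v : ℝ →ᵃ[ℝ] E')
    simp only [Set.preimage_univ] at this
    have heq : ψ = h ∘ AffineMap.lineMap u v := by
      funext t
      simp [ψ, AffineMap.lineMap_apply, add_comm]
    rw [heq]; exact this
  have hline : HasDerivAt (fun t : ℝ => u + t • (v - u)) (v - u) 0 := by
    simpa using ((hasDerivAt_id (0:ℝ)).smul_const (v - u)).const_add u
  have hψd : HasDerivAt ψ (fderiv ℝ h u (v - u)) 0 := by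
    have hc' : HasFDerivAt h (fderiv ℝ h u) ((fun t : ℝ => u + t • (v - u)) 0) := by
      simpa using (hd u).hasFDerivAt
    exact hc'.comp_hasDerivAt 0 hline
  have hs := hψc.le_slope_of_hasDerivAt (Set.mem_univ (0:ℝ)) (Set.mem_univ (1:ℝ)) one_pos hψd
  rw [slope_def_field] at hs
  have h1 : ψ 1 = h v := by simp [ψ]
  have h0 : ψ 0 = h u := by simp [ψ]
  rw [aux_inner_gradient]
  rw [h1, h0] at hs
  simp only [map_sub] at hs ⊢
  linarith

private lemma aux_coco (h : E' → ℝ) (hd : Differentiable ℝ h)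
    (hc : ConvexOn ℝ Set.univ h) {L : ℝ} (hL : 0 < L)
    (hsm : ∀ u v : E', h v ≤ h u + ⟪gradient h u, v - u⟫ + L / 2 * ‖v - u‖ ^ 2)
    (x w : E') :
    ‖gradient h x - gradient h w‖ ^ 2 ≤ 2 * L * (h w - h x - ⟪gradient h x, w - x⟫) := by
  set G : E' := gradient h w - gradient h x with hG
  set u0 : E' := w - L⁻¹ • G with hu0
  have h1 : h x + ⟪gradient h x, u0 - x⟫ ≤ h u0 := aux_grad_ineq h hd hc x u0
  have h2 : h u0 ≤ h w + ⟪gradient h w, u0 - w⟫ + L / 2 * ‖u0 - w‖ ^ 2 := hsm w u0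
  have huw : u0 - w = -(L⁻¹ • G) := by rw [hu0]; abel
  have hux : u0 - x = (w - x) - L⁻¹ • G := by rw [hu0]; abel
  have e1 : ⟪gradient h x, u0 - x⟫ = ⟪gradient h x, w - x⟫ - L⁻¹ * ⟪gradient h x, G⟫ := by
    rw [hux, inner_sub_right, real_inner_smul_right]
  have e2 : ⟪gradient h w, u0 - w⟫ = -(L⁻¹ * ⟪gradient h w, G⟫) := by
    rw [huw, inner_neg_right, real_inner_smul_right]
  have e3 : ‖u0 - w‖ ^ 2 = L⁻¹ ^ 2 * ‖G‖ ^ 2 := by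
    rw [huw, norm_neg, norm_smul, mul_pow, norm_inv, Real.norm_eq_abs, abs_of_pos hL]
  have e4 : ⟪gradient h w, G⟫ - ⟪gradient h x, G⟫ = ‖G‖ ^ 2 := by
    rw [← inner_sub_left, ← hG, real_inner_self_eq_norm_sq]
  have e5 : ‖gradient h x - gradient h w‖ = ‖G‖ := by rw [hG, norm_sub_rev]
  rw [e5]
  have hL' : L ≠ 0 := ne_of_gt hL
  rw [e1] at h1
  rw [e2, e3] at h2
  have e4' : L⁻¹ * ⟪gradient h w, G⟫ - L⁻¹ * ⟪gradient h x, G⟫ = L⁻¹ * ‖G‖ ^ 2 := by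
    rw [← mul_sub, e4]
  have e6 : L / 2 * (L⁻¹ ^ 2 * ‖G‖ ^ 2) = L⁻¹ / 2 * ‖G‖ ^ 2 := by
    field_simp
  have key : L⁻¹ / 2 * ‖G‖ ^ 2 ≤ h w - h x - ⟪gradient h x, w - x⟫ := by linarith
  have e7 : 2 * L * (L⁻¹ / 2 * ‖G‖ ^ 2) = ‖G‖ ^ 2 := by field_simp
  have := mul_le_mul_of_nonneg_left key (by positivity : (0:ℝ) ≤ 2 * L)
  linarith

private lemma aux_grad_avg {ι : Type*} [Fintype ι] (f : ι → E' → ℝ)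
    (hdiff : ∀ j, Differentiable ℝ (f j)) (c : ℝ) (u : E') :
    gradient (fun v => c * ∑ j, f j v) u = c • ∑ j, gradient (f j) u := by
  have h1 : HasFDerivAt (fun v => c * ∑ j, f j v) (c • ∑ j, fderiv ℝ (f j) u) u :=
    (HasFDerivAt.fun_sum (fun j _ => ((hdiff j) u).hasFDerivAt)).const_mul c
  show (InnerProductSpace.toDual ℝ E').symm _ = _
  rw [h1.fderiv, _root_.map_smul, map_sum]
  rfl

end aux

section auxint

variable {Ω : Type*} [MeasureSpace Ω] [IsFiniteMeasure (ℙ : Measure Ω)]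
  {ι : Type*} [Fintype ι] [MeasurableSpace ι] [MeasurableSingletonClass ι]
  {E : Type*} [NormedAddCommGroup E] [NormedSpace ℝ E] [CompleteSpace E]

private lemma aux_key (T : Ω → ι) (φ : ι → E) (ω : Ω) :
    φ (T ω) = ∑ i, Set.indicator (T ⁻¹' {i}) (fun _ => φ i) ω := by
  rw [Finset.sum_eq_single (T ω)]
  · simp [Set.indicator]
  · intro b _ hb
    simp [Set.indicator, Ne.symm hb]
  · simp

private lemma aux_integrable_comp (T : Ω → ι) (hT : Measurable T) (φ : ι → E) :
    Integrable (fun ω => φ (T ω)) ℙ := by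
  have : (fun ω => φ (T ω)) = fun ω => ∑ i, Set.indicator (T ⁻¹' {i}) (fun _ => φ i) ω := by
    funext ω; exact aux_key T φ ω
  rw [this]
  exact integrable_finset_sum _ fun i _ =>
    (integrable_const _).indicator (hT (measurableSet_singleton i))

private lemma aux_integral_comp (T : Ω → ι) (hT : Measurable T) (φ : ι → E) :
    ∫ ω, φ (T ω) ∂ℙ = ∑ i, (ℙ (T ⁻¹' {i})).toReal • φ i := by
  have : (fun ω => φ (T ω)) = fun ω => ∑ i, Set.indicator (T ⁻¹' {i}) (fun _ => φ i) ω := by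
    funext ω; exact aux_key T φ ω
  rw [this, integral_finset_sum _ fun i _ =>
    (integrable_const _).indicator (hT (measurableSet_singleton i))]
  refine Finset.sum_congr rfl fun i _ => ?_
  rw [integral_indicator_const _ (hT (measurableSet_singleton i))]
  rfl

end auxint

theorem dvpl_katyusha_variance_bound
    {s d K : ℕ} (hs : 0 < s) (hK : 0 < K)
    (f : Fin s → EuclideanSpace ℝ (Fin d) → ℝ)
    (Lf : Fin s → ℝ) (hLf : ∀ j, 0 < Lf j)
    (hdiff : ∀ j, Differentiable ℝ (f j))
    (hconv : ∀ j, ConvexOn ℝ Set.univ (f j))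
    (hsmooth : ∀ j, ∀ u v : EuclideanSpace ℝ (Fin d),
      f j v ≤ f j u + ⟪gradient (f j) u, v - u⟫ + Lf j / 2 * ‖v - u‖ ^ 2)
    (F : EuclideanSpace ℝ (Fin d) → ℝ)
    (hF : F = fun u => (1 / (s : ℝ)) * ∑ j, f j u)
    (Lbar : ℝ) (hLbar : Lbar = (1 / (s : ℝ)) * ∑ j, Lf j)
    (x w : EuclideanSpace ℝ (Fin d))
    {Ω : Type*} [MeasureSpace Ω] [IsProbabilityMeasure (ℙ : Measure Ω)]
    (J : Fin K → Ω → Fin s)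
    (hJmeas : ∀ m, Measurable (J m))
    (hJindep : iIndepFun J ℙ)
    (hJlaw : ∀ m, ∀ j : Fin s,
      ℙ {ω | J m ω = j} = ENNReal.ofReal (Lf j / ((s : ℝ) * Lbar)))
    (g : Ω → EuclideanSpace ℝ (Fin d))
    (hg : ∀ ω, g ω = (1 / (K : ℝ)) •
        ∑ m : Fin K, (Lbar / Lf (J m ω)) •
          (gradient (f (J m ω)) x - gradient (f (J m ω)) w)
      + gradient F w) :
    (∫ ω, g ω ∂ℙ = gradient F x) ∧
    (∀ L : ℝ, 0 < L →
      (∀ u v : EuclideanSpace ℝ (Fin d),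
        F v ≤ F u + ⟪gradient F u, v - u⟫ + L / 2 * ‖v - u‖ ^ 2) →
      ∫ ω, ‖g ω - gradient F x‖ ^ 2 ∂ℙ
        ≤ 2 * max L (Lbar / (K : ℝ)) * (F w - F x - ⟪gradient F x, w - x⟫)) ∧
    (∫ ω, ‖g ω - gradient F x‖ ^ 2 ∂ℙ
      ≤ 2 * Lbar / (K : ℝ) * (F w - F x - ⟪gradient F x, w - x⟫)) := by
  have hs' : (0:ℝ) < s := by exact_mod_cast hs
  have hK' : (0:ℝ) < K := by exact_mod_cast hK
  have hs0 : (s:ℝ) ≠ 0 := ne_of_gt hs'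
  have hK0 : (K:ℝ) ≠ 0 := ne_of_gt hK'
  haveI : Nonempty (Fin s) := Fin.pos_iff_nonempty.mp hs
  have hLbar0 : 0 < Lbar := by
    rw [hLbar]
    have : 0 < ∑ j, Lf j := Finset.sum_pos (fun j _ => hLf j) Finset.univ_nonempty
    positivity
  have hLbarne : Lbar ≠ 0 := ne_of_gt hLbar0
  have hsumLf : ∑ j, Lf j = (s:ℝ) * Lbar := by
    rw [hLbar]; field_simp
  -- probabilities
  set p : Fin s → ℝ := fun j => Lf j / ((s:ℝ) * Lbar) with hp
  have hp0 : ∀ j, 0 ≤ p j := fun j => by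
    have := (hLf j).le; positivity
  have hppos : ∀ j, 0 < p j := fun j => by
    have := hLf j; positivity
  have hpsum : ∑ j, p j = 1 := by
    simp only [hp, ← Finset.sum_div]
    rw [hsumLf, div_self (by positivity)]
  have hpre : ∀ m j, (ℙ (J m ⁻¹' {j})).toReal = p j := by
    intro m j
    have hset : J m ⁻¹' {j} = {ω | J m ω = j} := rfl
    rw [hset, hJlaw m j, ENNReal.toReal_ofReal (hp0 j)]
  -- key vectors
  set Δ : Fin s → EuclideanSpace ℝ (Fin d) :=
    fun j => gradient (f j) x - gradient (f j) w with hΔ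
  set Y : Fin s → EuclideanSpace ℝ (Fin d) := fun j => (Lbar / Lf j) • Δ j with hY
  set μ : EuclideanSpace ℝ (Fin d) := gradient F x - gradient F w with hμ
  set Z : Fin s → EuclideanSpace ℝ (Fin d) := fun j => Y j - μ with hZ
  set B : Fin s → ℝ := fun j => f j w - f j x - ⟪gradient (f j) x, w - x⟫ with hB
  have hgradF : ∀ u, gradient F u = (1 / (s:ℝ)) • ∑ j, gradient (f j) u := by
    intro u; rw [hF]; exact aux_grad_avg f hdiff _ u
  have hgeq : ∀ ω, g ω = (1 / (K:ℝ)) • ∑ m : Fin K, Y (J m ω) + gradient F w :=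
    fun ω => hg ω
  -- p j • Y j = (1/s) • Δ j
  have hpY : ∀ j, p j • Y j = (1 / (s:ℝ)) • Δ j := by
    intro j
    rw [hY, smul_smul]
    congr 1
    have h1 := (hLf j).ne'
    simp only [hp]
    field_simp
  have hsumpY : ∑ j, p j • Y j = μ := by
    simp only [hpY]
    rw [← Finset.smul_sum, hΔ]
    rw [Finset.sum_sub_distrib, hμ, hgradF x, hgradF w, smul_sub]
  have hsumpZ : ∑ j, p j • Z j = 0 := by
    simp only [hZ, smul_sub]
    rw [Finset.sum_sub_distrib, hsumpY, ← Finset.sum_smul, hpsum, one_smul, sub_self]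
  -- integrability
  have hintY : ∀ m, Integrable (fun ω => Y (J m ω)) ℙ :=
    fun m => aux_integrable_comp (J m) (hJmeas m) Y
  have hEY : ∀ m, ∫ ω, Y (J m ω) ∂ℙ = μ := by
    intro m
    rw [aux_integral_comp (J m) (hJmeas m) Y]
    rw [← hsumpY]
    exact Finset.sum_congr rfl fun j _ => by rw [hpre m j]
  -- Part 1
  have part1 : ∫ ω, g ω ∂ℙ = gradient F x := by
    have hint1 : Integrable (fun ω => (1 / (K:ℝ)) • ∑ m : Fin K, Y (J m ω)) ℙ :=
      (integrable_finset_sum Finset.univ fun m _ => hintY m).smul (1 / (K:ℝ))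
    calc ∫ ω, g ω ∂ℙ
        = ∫ ω, ((1 / (K:ℝ)) • ∑ m : Fin K, Y (J m ω) + gradient F w) ∂ℙ := by
          simp only [hgeq]
      _ = (∫ ω, (1 / (K:ℝ)) • ∑ m : Fin K, Y (J m ω) ∂ℙ) + gradient F w := by
          rw [integral_add hint1 (integrable_const _), integral_const, probReal_univ,
            one_smul]
      _ = (1 / (K:ℝ)) • ∑ m : Fin K, ∫ ω, Y (J m ω) ∂ℙ + gradient F w := by
          rw [integral_smul, integral_finset_sum _ fun m _ => hintY m]
      _ = gradient F x := by
          simp only [hEY, Finset.sum_const, Finset.card_univ, Fintype.card_fin]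
          rw [← Nat.cast_smul_eq_nsmul ℝ, smul_smul, one_div,
            inv_mul_cancel₀ hK0, one_smul, hμ, sub_add_cancel]
  refine ⟨part1, ?_⟩
  -- pointwise rewriting of the squared norm
  have hZrw : ∀ ω, g ω - gradient F x = (1 / (K:ℝ)) • ∑ m : Fin K, Z (J m ω) := by
    intro ω
    have hsum : ∑ m : Fin K, Z (J m ω) = (∑ m : Fin K, Y (J m ω)) - (K:ℕ) • μ := by
      simp only [hZ]
      rw [Finset.sum_sub_distrib, Finset.sum_const, Finset.card_univ, Fintype.card_fin]
    rw [hgeq ω, hsum, smul_sub, ← Nat.cast_smul_eq_nsmul ℝ, smul_smul, one_div,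
      inv_mul_cancel₀ hK0, one_smul, hμ]
    abel
  have hnormrw : ∀ ω, ‖g ω - gradient F x‖ ^ 2
      = (1 / (K:ℝ)) ^ 2 * ∑ m : Fin K, ∑ m' : Fin K, ⟪Z (J m ω), Z (J m' ω)⟫ := by
    intro ω
    rw [hZrw ω, norm_smul, mul_pow, Real.norm_eq_abs, sq_abs]
    congr 1
    rw [← real_inner_self_eq_norm_sq, sum_inner]
    exact Finset.sum_congr rfl fun m _ => by rw [inner_sum]
  have hintZ : ∀ m m', Integrable (fun ω => ⟪Z (J m ω), Z (J m' ω)⟫) ℙ := by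
    intro m m'
    exact aux_integrable_comp (fun ω => (J m ω, J m' ω))
      ((hJmeas m).prodMk (hJmeas m')) (fun q => ⟪Z q.1, Z q.2⟫)
  have hI : ∫ ω, ‖g ω - gradient F x‖ ^ 2 ∂ℙ
      = (1 / (K:ℝ)) ^ 2 * ∑ m : Fin K, ∑ m' : Fin K, ∫ ω, ⟪Z (J m ω), Z (J m' ω)⟫ ∂ℙ := by
    simp only [hnormrw]
    rw [MeasureTheory.integral_const_mul, integral_finset_sum _
      (fun m _ => integrable_finset_sum _ fun m' _ => hintZ m m')]
    congr 1
    exact Finset.sum_congr rfl fun m _ =>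
      integral_finset_sum _ fun m' _ => hintZ m m'
  have hdiag : ∀ m, ∫ ω, ⟪Z (J m ω), Z (J m ω)⟫ ∂ℙ = ∑ j, p j * ⟪Z j, Z j⟫ := by
    intro m
    have h := aux_integral_comp (J m) (hJmeas m) (fun j => ⟪Z j, Z j⟫)
    rw [h]
    exact Finset.sum_congr rfl fun j _ => by rw [hpre m j, smul_eq_mul]
  have hoff : ∀ m m', m ≠ m' → ∫ ω, ⟪Z (J m ω), Z (J m' ω)⟫ ∂ℙ = 0 := by
    intro m m' hne
    have hjoint : ∀ i j : Fin s,
        (ℙ ((fun ω => (J m ω, J m' ω)) ⁻¹' {(i, j)})).toReal = p i * p j := by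
      intro i j
      have hset : (fun ω => (J m ω, J m' ω)) ⁻¹' {(i, j)}
          = J m ⁻¹' {i} ∩ J m' ⁻¹' {j} := by
        ext ω; simp [Prod.ext_iff]
      rw [hset, (hJindep.indepFun hne).measure_inter_preimage_eq_mul
        {i} {j} (measurableSet_singleton i) (measurableSet_singleton j),
        ENNReal.toReal_mul, hpre m i, hpre m' j]
    have h := aux_integral_comp (fun ω => (J m ω, J m' ω))
      ((hJmeas m).prodMk (hJmeas m')) (fun q => ⟪Z q.1, Z q.2⟫)
    rw [h]
    have : ∑ q : Fin s × Fin s,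
        (ℙ ((fun ω => (J m ω, J m' ω)) ⁻¹' {q})).toReal • ⟪Z q.1, Z q.2⟫
        = ∑ i : Fin s, ∑ j : Fin s, (p i * p j) * ⟪Z i, Z j⟫ := by
      rw [Fintype.sum_prod_type]
      exact Finset.sum_congr rfl fun i _ => Finset.sum_congr rfl fun j _ => by
        rw [hjoint i j, smul_eq_mul]
    rw [this]
    have h2 : ∑ i : Fin s, ∑ j : Fin s, (p i * p j) * ⟪Z i, Z j⟫
        = ⟪∑ i, p i • Z i, ∑ j, p j • Z j⟫ := by
      rw [sum_inner]
      refine Finset.sum_congr rfl fun i _ => ?_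
      rw [inner_sum]
      refine Finset.sum_congr rfl fun j _ => ?_
      rw [real_inner_smul_left, real_inner_smul_right]
      ring
    rw [h2, hsumpZ, inner_zero_left]
  -- the value of the variance
  have hVal : ∫ ω, ‖g ω - gradient F x‖ ^ 2 ∂ℙ
      = (1 / (K:ℝ)) * ∑ j, p j * ⟪Z j, Z j⟫ := by
    rw [hI]
    have hrow : ∀ m : Fin K, ∑ m' : Fin K, ∫ ω, ⟪Z (J m ω), Z (J m' ω)⟫ ∂ℙ
        = ∑ j, p j * ⟪Z j, Z j⟫ := by
      intro m
      rw [Finset.sum_eq_single m]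
      · exact hdiag m
      · intro m' _ hne
        exact hoff m m' (Ne.symm hne)
      · intro h; exact absurd (Finset.mem_univ m) h
    simp only [hrow, Finset.sum_const, Finset.card_univ, Fintype.card_fin, nsmul_eq_mul]
    field_simp
  have hVeq : ∑ j, p j * ⟪Z j, Z j⟫ = ∑ j, p j * ‖Y j‖ ^ 2 - ‖μ‖ ^ 2 := by
    have h1 : ∀ j, p j * ⟪Z j, Z j⟫
        = p j * ‖Y j‖ ^ 2 - 2 * (p j * ⟪Y j, μ⟫) + p j * ‖μ‖ ^ 2 := by
      intro j
      have hz : ⟪Z j, Z j⟫ = ‖Y j‖ ^ 2 - 2 * ⟪Y j, μ⟫ + ‖μ‖ ^ 2 := by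
        simp only [hZ]
        rw [real_inner_sub_sub_self, real_inner_self_eq_norm_sq,
          real_inner_self_eq_norm_sq]
      rw [hz]; ring
    have h2 : ∑ j, p j * ⟪Y j, μ⟫ = ‖μ‖ ^ 2 := by
      have : ∑ j, p j * ⟪Y j, μ⟫ = ⟪∑ j, p j • Y j, μ⟫ := by
        rw [sum_inner]
        exact Finset.sum_congr rfl fun j _ => (real_inner_smul_left _ _ _).symm
      rw [this, hsumpY, real_inner_self_eq_norm_sq]
    calc ∑ j, p j * ⟪Z j, Z j⟫
        = ∑ j, (p j * ‖Y j‖ ^ 2 - 2 * (p j * ⟪Y j, μ⟫) + p j * ‖μ‖ ^ 2) :=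
          Finset.sum_congr rfl fun j _ => h1 j
      _ = ∑ j, p j * ‖Y j‖ ^ 2 - 2 * ∑ j, p j * ⟪Y j, μ⟫ + (∑ j, p j) * ‖μ‖ ^ 2 := by
          rw [Finset.sum_add_distrib, Finset.sum_sub_distrib, ← Finset.mul_sum,
            ← Finset.sum_mul]
      _ = ∑ j, p j * ‖Y j‖ ^ 2 - ‖μ‖ ^ 2 := by
          rw [h2, hpsum]; ring
  have hcoco : ∀ j, ‖Δ j‖ ^ 2 ≤ 2 * Lf j * B j := by
    intro j
    have h := aux_coco (f j) (hdiff j) (hconv j) (hLf j) (hsmooth j) x w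
    simp only [hΔ, hB]
    exact h
  have hYB : ∀ j, p j * ‖Y j‖ ^ 2 ≤ 2 * Lbar / s * B j := by
    intro j
    have hLfj : (Lf j) ≠ 0 := (hLf j).ne'
    have hnY : ‖Y j‖ ^ 2 = (Lbar / Lf j) ^ 2 * ‖Δ j‖ ^ 2 := by
      simp only [hY]
      rw [norm_smul, mul_pow, Real.norm_eq_abs, sq_abs]
    have hc := hcoco j
    have hcoeff : 0 ≤ p j * (Lbar / Lf j) ^ 2 := mul_nonneg (hp0 j) (sq_nonneg _)
    calc p j * ‖Y j‖ ^ 2 = p j * (Lbar / Lf j) ^ 2 * ‖Δ j‖ ^ 2 := by rw [hnY]; ring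
      _ ≤ p j * (Lbar / Lf j) ^ 2 * (2 * Lf j * B j) := mul_le_mul_of_nonneg_left hc hcoeff
      _ = 2 * Lbar / s * B j := by
          simp only [hp]
          field_simp
  have hsumYB : ∑ j, p j * ‖Y j‖ ^ 2 ≤ 2 * Lbar / s * ∑ j, B j := by
    rw [Finset.mul_sum]
    exact Finset.sum_le_sum fun j _ => hYB j
  have hB0 : ∀ j, 0 ≤ B j := by
    intro j
    have h := aux_grad_ineq (f j) (hdiff j) (hconv j) x w
    simp only [hB]
    linarith
  have hRB : F w - F x - ⟪gradient F x, w - x⟫ = (1 / (s:ℝ)) * ∑ j, B j := by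
    have hip : ⟪gradient F x, w - x⟫
        = (1 / (s:ℝ)) * ∑ j, ⟪gradient (f j) x, w - x⟫ := by
      rw [hgradF x, real_inner_smul_left, sum_inner]
    simp only [hB]
    rw [hip, hF]
    simp only [Finset.sum_sub_distrib]
    ring
  have hR0 : 0 ≤ F w - F x - ⟪gradient F x, w - x⟫ := by
    rw [hRB]
    have h := Finset.sum_nonneg fun j (_ : j ∈ Finset.univ) => hB0 j
    positivity
  have part3 : ∫ ω, ‖g ω - gradient F x‖ ^ 2 ∂ℙ
      ≤ 2 * Lbar / K * (F w - F x - ⟪gradient F x, w - x⟫) := by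
    rw [hVal, hRB]
    have hstep : ∑ j, p j * ⟪Z j, Z j⟫ ≤ 2 * Lbar / s * ∑ j, B j := by
      rw [hVeq]
      nlinarith [sq_nonneg ‖μ‖, hsumYB]
    have h1K : (0:ℝ) ≤ 1 / (K:ℝ) := by positivity
    calc (1 / (K:ℝ)) * ∑ j, p j * ⟪Z j, Z j⟫
        ≤ (1 / (K:ℝ)) * (2 * Lbar / s * ∑ j, B j) := mul_le_mul_of_nonneg_left hstep h1K
      _ = 2 * Lbar / (K:ℝ) * ((1 / (s:ℝ)) * ∑ j, B j) := by
          field_simp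
  refine ⟨?_, part3⟩
  intro L hL hFsm
  have hmax : 2 * Lbar / K ≤ 2 * max L (Lbar / (K:ℝ)) := by
    have h := le_max_right L (Lbar / (K:ℝ))
    calc 2 * Lbar / (K:ℝ) = 2 * (Lbar / (K:ℝ)) := by ring
      _ ≤ 2 * max L (Lbar / (K:ℝ)) := by linarith
  exact part3.trans (mul_le_mul_of_nonneg_right hmax hR0)
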